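/- arXiv:0704.1139 — 2 statements merged into one kernel-verified Lean document; each statement's English description precedes it below -/
import Mathlib

section
/- Let M ⊂ {1,…,p} with |M| = m and suppose D ⊄ M, where D is the support of β with min_{j∈D}|β_j| = ψ. Let β̂_M be the least-squares estimator on M (extended by zeros). Then L(β̂_M) = n⁻¹(β̂_M − β)ᵀ Xᵀ X(β̂_M − β) ≥ φ_n(m+s) · ψ², where s = |D| and φ_n(k) is the minimal smallest eigenvalue of n⁻¹ X_Aᵀ X_A over all subsets A of size k ≥ |supp(β̂_M) ∪ D|. -/
open Matrix

/-- The smallest eigenvalue of a real symmetric matrix (junk value `0` if not symmetric). -/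
noncomputable def lamMin {m : Type*} [Fintype m] [DecidableEq m] (B : Matrix m m ℝ) : ℝ :=
  if h : B.IsHermitian then ⨅ j, h.eigenvalues j else 0

/-- `φₙ(k)`: the minimum over all subsets `A` of size `k` of the smallest eigenvalue of
`n⁻¹ X_Aᵀ X_A`. -/
noncomputable def phiN {n p : ℕ} (X : Matrix (Fin n) (Fin p) ℝ) (k : ℕ) : ℝ :=
  ⨅ A : {A : Finset (Fin p) // A.card = k},
    lamMin ((n : ℝ)⁻¹ • ((Matrix.of fun i (j : {j // j ∈ A.1}) => X i j.1)ᵀ *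
      (Matrix.of fun i (j : {j // j ∈ A.1}) => X i j.1)))

/-- Rayleigh-type lower bound: for a real symmetric matrix, the quadratic form is bounded
below by the smallest eigenvalue times the squared norm. -/
lemma rayleigh_min {m : Type*} [Fintype m] [DecidableEq m] (B : Matrix m m ℝ)
    (hB : B.IsHermitian) (x : m → ℝ) :
    (⨅ j, hB.eigenvalues j) * (x ⬝ᵥ x) ≤ x ⬝ᵥ B *ᵥ x := by
  classical
  set U : Matrix m m ℝ := (hB.eigenvectorUnitary : Matrix m m ℝ) with hU
  have hstar : star U = Uᵀ := by
    ext i j; simp [Matrix.star_apply]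
  set y : m → ℝ := Uᵀ *ᵥ x with hy
  have hsU : U * Uᵀ = 1 := by rw [← hstar]; exact hB.eigenvectorUnitary.2.2
  have key : ∀ w : m → ℝ, x ⬝ᵥ (U *ᵥ w) = y ⬝ᵥ w := by
    intro w
    rw [dotProduct_mulVec, hy, mulVec_transpose]
  have hxy : x ⬝ᵥ x = y ⬝ᵥ y := by
    have : U *ᵥ y = x := by
      rw [hy, mulVec_mulVec, hsU, one_mulVec]
    calc x ⬝ᵥ x = x ⬝ᵥ U *ᵥ y := by rw [this]
    _ = y ⬝ᵥ y := key y
  have hquad : x ⬝ᵥ B *ᵥ x = ∑ j, hB.eigenvalues j * (y j * y j) := by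
    conv_lhs => rw [hB.spectral_theorem, Unitary.conjStarAlgAut_apply, ← hU]
    rw [hstar, Matrix.mul_assoc, ← mulVec_mulVec, ← mulVec_mulVec, key]
    rw [dotProduct]
    congr 1; ext j
    rw [mulVec_diagonal]
    rw [← hy]; ring_nf; rfl
  rw [hxy, hquad, dotProduct, Finset.mul_sum]
  apply Finset.sum_le_sum
  intro j _
  have h1 : (⨅ j, hB.eigenvalues j) ≤ hB.eigenvalues j :=
    ciInf_le (Finite.bddBelow_range _) j
  exact mul_le_mul_of_nonneg_right h1 (mul_self_nonneg _)

/-- A nonnegative multiple of a real Gram matrix is positive semidefinite. -/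
lemma psd_smul {ι κ : Type*} [Fintype ι] [Fintype κ] [DecidableEq ι] (G : Matrix κ ι ℝ)
    (c : ℝ) (hc : 0 ≤ c) : (c • (Gᵀ * G)).PosSemidef := by
  have h : (Gᵀ * G).PosSemidef := by
    have := Matrix.posSemidef_conjTranspose_mul_self G
    simpa using this
  refine ⟨?_, fun x => ?_⟩
  · rw [Matrix.IsHermitian, conjTranspose_smul, h.1]; simp
  · exact (h.smul hc).2 x

lemma lamMin_nonneg_of_psd {m : Type*} [Fintype m] [DecidableEq m] {B : Matrix m m ℝ}
    (hB : B.PosSemidef) : 0 ≤ lamMin B := by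
  rw [lamMin, dif_pos hB.1]
  exact Real.iInf_nonneg fun j => hB.eigenvalues_nonneg j

/-- If `M` has size `m` and does not contain the support `D` of `β` (with `|D| = s` and
`min_{j∈D} |β_j| = ψ > 0`), then the least-squares estimator `β̂_M` on `M` (extended by
zeros) satisfies `L(β̂_M) = n⁻¹ (β̂_M − β)ᵀ Xᵀ X (β̂_M − β) ≥ φₙ(m+s) ψ²`. -/
theorem stmt5 (n p : ℕ) (hn : 0 < n)
    (X : Matrix (Fin n) (Fin p) ℝ) (β : Fin p → ℝ) (ε Y : Fin n → ℝ)
    (hY : Y = X.mulVec β + ε)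
    (D : Finset (Fin p)) (hD : ∀ j, j ∈ D ↔ β j ≠ 0)
    (m s : ℕ) (M : Finset (Fin p)) (hm : M.card = m) (hs : D.card = s)
    (hmp : m + s ≤ p)
    (hnotsub : ¬ D ⊆ M)
    (ψ : ℝ) (hψpos : 0 < ψ) (hψ : ∀ j ∈ D, ψ ≤ |β j|)
    (Xm : Matrix (Fin n) {j // j ∈ M} ℝ) (hXm : Xm = Matrix.of fun i j => X i j.1)
    (hG : IsUnit (Xmᵀ * Xm).det)
    (bM : {j // j ∈ M} → ℝ) (hbM : bM = ((Xmᵀ * Xm)⁻¹).mulVec (Xmᵀ.mulVec Y))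
    (b : Fin p → ℝ) (hb : ∀ j : Fin p, b j = if h : j ∈ M then bM ⟨j, h⟩ else 0) :
    phiN X (m + s) * ψ ^ 2 ≤
      (n : ℝ)⁻¹ * ((b - β) ⬝ᵥ ((Xᵀ * X).mulVec (b - β))) := by
  classical
  set v : Fin p → ℝ := b - β with hv
  have hninv : (0:ℝ) ≤ (n : ℝ)⁻¹ := by positivity
  -- v vanishes off M ∪ D
  have hv0 : ∀ j : Fin p, j ∉ M ∪ D → v j = 0 := by
    intro j hj
    rw [Finset.mem_union] at hj
    push_neg at hj
    have hβ : β j = 0 := by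
      by_contra h; exact hj.2 ((hD j).mpr h)
    have hbj : b j = 0 := by rw [hb j, dif_neg hj.1]
    simp [hv, hbj, hβ]
  -- choose A ⊇ M ∪ D with |A| = m + s
  have hcard : (M ∪ D).card ≤ m + s := by
    calc (M ∪ D).card ≤ M.card + D.card := Finset.card_union_le _ _
    _ = m + s := by rw [hm, hs]
  obtain ⟨A, hMDA, hAcard⟩ := Finset.exists_superset_card_eq hcard (by simpa using hmp)
  set Xa : Matrix (Fin n) {j // j ∈ A} ℝ := Matrix.of fun i (j : {j // j ∈ A}) => X i j.1
    with hXa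
  set B : Matrix {j // j ∈ A} {j // j ∈ A} ℝ := (n : ℝ)⁻¹ • (Xaᵀ * Xa) with hBdef
  set va : {j // j ∈ A} → ℝ := fun j => v j.1 with hva
  have hPSD : B.PosSemidef := psd_smul Xa _ hninv
  have hB : B.IsHermitian := hPSD.1
  -- φₙ(m+s) ≤ lamMin B
  have hbdd : BddBelow (Set.range fun A' : {A' : Finset (Fin p) // A'.card = m + s} =>
      lamMin ((n : ℝ)⁻¹ • ((Matrix.of fun i (j : {j // j ∈ A'.1}) => X i j.1)ᵀ *
        (Matrix.of fun i (j : {j // j ∈ A'.1}) => X i j.1)))) := by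
    refine ⟨0, ?_⟩
    rintro _ ⟨A', rfl⟩
    exact lamMin_nonneg_of_psd (psd_smul _ _ hninv)
  have hphile : phiN X (m + s) ≤ lamMin B :=
    ciInf_le hbdd (⟨A, hAcard⟩ : {A' : Finset (Fin p) // A'.card = m + s})
  have hphinonneg : 0 ≤ phiN X (m + s) :=
    Real.iInf_nonneg fun A' => lamMin_nonneg_of_psd (psd_smul _ _ hninv)
  -- Xa *ᵥ va = X *ᵥ v
  have hXvv : Xa *ᵥ va = X *ᵥ v := by
    funext i
    show ∑ j : {j // j ∈ A}, X i j.1 * v j.1 = ∑ j : Fin p, X i j * v j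
    rw [Finset.sum_coe_sort A (fun j => X i j * v j)]
    refine Finset.sum_subset (Finset.subset_univ A) ?_
    intro j _ hjA
    have : v j = 0 := hv0 j (fun h => hjA (hMDA h))
    rw [this, mul_zero]
  -- quadratic form identity
  have hquad : va ⬝ᵥ B *ᵥ va = (n : ℝ)⁻¹ * (v ⬝ᵥ (Xᵀ * X) *ᵥ v) := by
    rw [hBdef, smul_mulVec, dotProduct_smul, smul_eq_mul]
    congr 1
    have e1 : va ⬝ᵥ (Xaᵀ * Xa) *ᵥ va = (Xa *ᵥ va) ⬝ᵥ (Xa *ᵥ va) := by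
      rw [← mulVec_mulVec, dotProduct_mulVec, vecMul_transpose]
    have e2 : v ⬝ᵥ (Xᵀ * X) *ᵥ v = (X *ᵥ v) ⬝ᵥ (X *ᵥ v) := by
      rw [← mulVec_mulVec, dotProduct_mulVec, vecMul_transpose]
    rw [e1, e2, hXvv]
  -- lower bound on va ⬝ᵥ va
  obtain ⟨j₀, hj₀D, hj₀M⟩ := Finset.not_subset.mp hnotsub
  have hj₀A : j₀ ∈ A := hMDA (Finset.mem_union_right _ hj₀D)
  have hvj₀ : v j₀ = -β j₀ := by
    have : b j₀ = 0 := by rw [hb j₀, dif_neg hj₀M]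
    simp [hv, this]
  have hψ2 : ψ ^ 2 ≤ v j₀ * v j₀ := by
    have h1 : ψ ≤ |β j₀| := hψ j₀ hj₀D
    have h2 : ψ ^ 2 ≤ |β j₀| ^ 2 := pow_le_pow_left₀ hψpos.le h1 2
    calc ψ ^ 2 ≤ |β j₀| ^ 2 := h2
    _ = β j₀ ^ 2 := sq_abs _
    _ = v j₀ * v j₀ := by rw [hvj₀]; ring
  have hvava : ψ ^ 2 ≤ va ⬝ᵥ va := by
    calc ψ ^ 2 ≤ v j₀ * v j₀ := hψ2
    _ = va ⟨j₀, hj₀A⟩ * va ⟨j₀, hj₀A⟩ := rfl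
    _ ≤ ∑ j : {j // j ∈ A}, va j * va j := by
        refine Finset.single_le_sum (fun j _ => mul_self_nonneg (va j)) ?_
        exact Finset.mem_univ _
    _ = va ⬝ᵥ va := rfl
  have hvanonneg : 0 ≤ va ⬝ᵥ va := le_trans (by positivity) hvava
  -- Rayleigh bound
  have hray : lamMin B * (va ⬝ᵥ va) ≤ va ⬝ᵥ B *ᵥ va := by
    have := rayleigh_min B hB va
    rwa [lamMin, dif_pos hB]
  calc phiN X (m + s) * ψ ^ 2
      ≤ phiN X (m + s) * (va ⬝ᵥ va) := mul_le_mul_of_nonneg_left hvava hphinonneg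
    _ ≤ lamMin B * (va ⬝ᵥ va) := mul_le_mul_of_nonneg_right hphile hvanonneg
    _ ≤ va ⬝ᵥ B *ᵥ va := hray
    _ = (n : ℝ)⁻¹ * (v ⬝ᵥ (Xᵀ * X) *ᵥ v) := hquad
end

section
/- Let R(b) = τ² + bᵀΣb − 2bᵀρ with Σ positive semidefinite, and h(ℓ) = min_{‖b‖₁ ≤ ℓ} R(b). Fix Ω > 0 and suppose C = max{max_j |ρ_j|, max_{j,k} |Σ_{jk}|}. Then for all 0 ≤ ℓ and δ > 0 with ℓ + δ ≤ Ω, 0 ≤ h(ℓ) − h(ℓ+δ) ≤ 2δC + δ(2Ω + δ)C·Ω², i.e., h is locally Lipschitz on [0, Ω] with constant depending only on C and Ω. -/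
open Matrix

/-- Let `R(b) = τ² + bᵀΣb − 2bᵀρ` with `Σ` positive semidefinite,
`h(ℓ) = inf_{‖b‖₁ ≤ ℓ} R(b)` and `C = max{max_j |ρ_j|, max_{j,k} |Σ_{jk}|}`. Then for all
`0 ≤ ℓ` and `δ > 0` with `ℓ + δ ≤ Ω`,
`0 ≤ h(ℓ) − h(ℓ+δ) ≤ 2δC + δ(2Ω + δ)CΩ²`. -/
theorem stmt8 (p : ℕ) (hp : 0 < p) (τsq : ℝ) (ρ : Fin p → ℝ)
    (S : Matrix (Fin p) (Fin p) ℝ) (hS : S.PosSemidef)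
    (Ω : ℝ) (hΩ : 0 < Ω)
    (R : (Fin p → ℝ) → ℝ)
    (hR : ∀ b, R b = τsq + b ⬝ᵥ S.mulVec b - 2 * (b ⬝ᵥ ρ))
    (h : ℝ → ℝ)
    (hh : ∀ ℓ, h ℓ = sInf (R '' {b | ∑ j, |b j| ≤ ℓ}))
    (C : ℝ)
    (hC : C = max
      (Finset.univ.sup' (Finset.univ_nonempty_iff.mpr (Fin.pos_iff_nonempty.mp hp))
        fun j => |ρ j|)
      (Finset.univ.sup' (Finset.univ_nonempty_iff.mpr ⟨(⟨0, hp⟩, ⟨0, hp⟩)⟩)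
        fun jk : Fin p × Fin p => |S jk.1 jk.2|)) :
    ∀ ℓ δ : ℝ, 0 ≤ ℓ → 0 < δ → ℓ + δ ≤ Ω →
      0 ≤ h ℓ - h (ℓ + δ) ∧
      h ℓ - h (ℓ + δ) ≤ 2 * δ * C + δ * (2 * Ω + δ) * C * Ω ^ 2 := by
  intro ℓ δ hℓ hδ hΩ'
  -- basic facts about C
  have hρC : ∀ j, |ρ j| ≤ C := by
    intro j
    rw [hC]
    exact le_trans (Finset.le_sup' (fun j => |ρ j|) (Finset.mem_univ j)) (le_max_left _ _)
  have hC0 : 0 ≤ C := le_trans (abs_nonneg _) (hρC ⟨0, hp⟩)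
  -- bound on |b ⬝ᵥ ρ|
  have hdot : ∀ b : Fin p → ℝ, |b ⬝ᵥ ρ| ≤ C * ∑ j, |b j| := by
    intro b
    calc |b ⬝ᵥ ρ| ≤ ∑ j, |b j * ρ j| := Finset.abs_sum_le_sum_abs _ _
      _ ≤ ∑ j, |b j| * C := by
          refine Finset.sum_le_sum fun j _ => ?_
          rw [abs_mul]
          exact mul_le_mul_of_nonneg_left (hρC j) (abs_nonneg _)
      _ = C * ∑ j, |b j| := by rw [Finset.mul_sum]; exact Finset.sum_congr rfl fun i _ => mul_comm _ _
  -- quadratic form nonneg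
  have hq : ∀ b : Fin p → ℝ, 0 ≤ b ⬝ᵥ S.mulVec b := by
    intro b
    have := hS.dotProduct_mulVec_nonneg b
    simpa using this
  -- lower bound for R on sets of radius ≤ Ω
  have hlb : ∀ r, r ≤ Ω → ∀ x ∈ R '' {b : Fin p → ℝ | ∑ j, |b j| ≤ r},
      τsq - 2 * (C * Ω) ≤ x := by
    intro r hr x hx
    obtain ⟨b, hb, rfl⟩ := hx
    have hb1 : (0:ℝ) ≤ ∑ j, |b j| := Finset.sum_nonneg fun j _ => abs_nonneg _
    have h1 : b ⬝ᵥ ρ ≤ C * Ω := by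
      calc b ⬝ᵥ ρ ≤ |b ⬝ᵥ ρ| := le_abs_self _
        _ ≤ C * ∑ j, |b j| := hdot b
        _ ≤ C * Ω := mul_le_mul_of_nonneg_left (le_trans hb hr) hC0
    rw [hR]
    nlinarith [hq b]
  have hbdd : ∀ r, r ≤ Ω → BddBelow (R '' {b : Fin p → ℝ | ∑ j, |b j| ≤ r}) :=
    fun r hr => ⟨τsq - 2 * (C * Ω), fun x hx => hlb r hr x hx⟩
  have hne : ∀ r, 0 ≤ r → (R '' {b : Fin p → ℝ | ∑ j, |b j| ≤ r}).Nonempty := by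
    intro r hr
    refine ⟨R 0, Set.mem_image_of_mem _ ?_⟩
    simp [hr]
  have hℓδ : (0:ℝ) < ℓ + δ := by linarith
  have hℓδΩ : ℓ + δ ≤ Ω := hΩ'
  have hℓΩ : ℓ ≤ Ω := by linarith
  -- monotonicity: h (ℓ+δ) ≤ h ℓ
  have hmono : h (ℓ + δ) ≤ h ℓ := by
    rw [hh, hh]
    refine csInf_le_csInf (hbdd _ hℓδΩ) (hne _ hℓ) ?_
    exact Set.image_mono (fun b hb => by simp only [Set.mem_setOf_eq] at hb ⊢; linarith)
  -- key estimate: h ℓ ≤ h (ℓ+δ) + 2δC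
  have hkey : h ℓ - 2 * δ * C ≤ h (ℓ + δ) := by
    rw [hh (ℓ + δ)]
    refine le_csInf (hne _ (by linarith)) ?_
    rintro x ⟨b, hb, rfl⟩
    rw [Set.mem_setOf_eq] at hb
    set t : ℝ := ℓ / (ℓ + δ) with ht
    have ht0 : 0 ≤ t := div_nonneg hℓ hℓδ.le
    have ht1 : t ≤ 1 := by
      rw [ht, div_le_one hℓδ]; linarith
    have hmem : (t • b) ∈ {b : Fin p → ℝ | ∑ j, |b j| ≤ ℓ} := by
      have hsum : ∑ j, |(t • b) j| = t * ∑ j, |b j| := by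
        simp [Pi.smul_apply, smul_eq_mul, abs_mul, abs_of_nonneg ht0, Finset.mul_sum]
      rw [Set.mem_setOf_eq, hsum]
      calc t * ∑ j, |b j| ≤ t * (ℓ + δ) := mul_le_mul_of_nonneg_left hb ht0
        _ = ℓ := by rw [ht]; field_simp
    have h1 : h ℓ ≤ R (t • b) := by
      rw [hh ℓ]
      exact csInf_le (hbdd _ hℓΩ) (Set.mem_image_of_mem _ hmem)
    have h2 : R (t • b) ≤ R b + 2 * δ * C := by
      rw [hR, hR]
      have e1 : (t • b) ⬝ᵥ S.mulVec (t • b) = t ^ 2 * (b ⬝ᵥ S.mulVec b) := by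
        rw [Matrix.mulVec_smul, smul_dotProduct, dotProduct_smul, smul_eq_mul, smul_eq_mul]
        ring
      have e2 : (t • b) ⬝ᵥ ρ = t * (b ⬝ᵥ ρ) := by
        rw [smul_dotProduct, smul_eq_mul]
      rw [e1, e2]
      have hbρ : b ⬝ᵥ ρ ≤ C * (ℓ + δ) :=
        le_trans (le_abs_self _) (le_trans (hdot b) (mul_le_mul_of_nonneg_left hb hC0))
      have hts : (1 - t) * (ℓ + δ) = δ := by rw [ht]; field_simp; ring
      nlinarith [hq b, mul_nonneg (mul_nonneg (sub_nonneg.2 ht1) (by linarith : (0:ℝ) ≤ 1 + t)) (hq b),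
        mul_nonneg (sub_nonneg.2 ht1) (sub_nonneg.2 hbρ)]
    linarith
  refine ⟨by linarith, ?_⟩
  have : 0 ≤ δ * (2 * Ω + δ) * C * Ω ^ 2 := by positivity
  linarith
end
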